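/- Let b, σ²: [0,1] → ℝ be continuous with σ² > 0, B(u) = ∫_0^u b, b̄ = B(1), B(u) > b̄u on (0,1), and b̄ − b(1) > σ²(1)/2. Define Ψ(u) = ∫_{1/2}^u σ²(v)/(2(B(v)−b̄v)) dv and the stationary capital density π_st(v) = exp(Ψ(1−v)) / ∫_0^1 exp(Ψ(1−w)) dw on (0,1). Then lim_{v→0⁺} log(π_st(v)) / log(v) = −σ²(1)/(2(b̄ − b(1))). -/

import Mathlib

open Set Filter MeasureTheory intervalIntegral

lemma aux_ratio_log {K : ℝ → ℝ} {c : ℝ}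
    (hKc : ContinuousOn K (Ioc 0 (1/2 : ℝ)))
    (hK0 : Tendsto K (nhdsWithin 0 (Ioi 0)) (nhds c)) :
    Tendsto (fun v => (∫ t in v..(1/2 : ℝ), K t / t) / Real.log v)
      (nhdsWithin 0 (Ioi 0)) (nhds (-c)) := by
  have hcont : ContinuousOn (fun t => K t / t) (Ioc 0 (1/2 : ℝ)) :=
    hKc.div (continuousOn_id) (fun t ht => ne_of_gt ht.1)
  rw [Metric.tendsto_nhdsWithin_nhds]
  intro ε hε
  rw [Metric.tendsto_nhdsWithin_nhds] at hK0
  obtain ⟨δ₁, hδ₁, hK⟩ := hK0 (ε/2) (by positivity)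
  set d : ℝ := min (δ₁/2) (1/2) with hd_def
  have hd : 0 < d := lt_min (by linarith) (by norm_num)
  have hd2 : d ≤ 1/2 := min_le_right _ _
  have hKbound : ∀ t ∈ Ioc (0:ℝ) d, |K t - c| ≤ ε/2 := by
    intro t ht
    have := hK (ht.1) (by
      rw [Real.dist_eq, sub_zero, abs_of_pos ht.1]
      calc t ≤ d := ht.2
        _ ≤ δ₁/2 := min_le_left _ _
        _ < δ₁ := by linarith)
    rw [Real.dist_eq] at this
    exact this.le
  set C₁ : ℝ := ∫ t in d..(1/2 : ℝ), K t / t with hC₁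
  set A : ℝ := |C₁ + c * Real.log d| with hA
  have hA0 : 0 ≤ A := abs_nonneg _
  refine ⟨min d (Real.exp (-((2*A+1)/ε))), lt_min hd (Real.exp_pos _), ?_⟩
  intro v hv hvd
  have hv0 : 0 < v := hv
  rw [Real.dist_eq, sub_zero, abs_of_pos hv0] at hvd
  have hvd' : v < d := lt_of_lt_of_le hvd (min_le_left _ _)
  have hlogv : Real.log v < -((2*A+1)/ε) := by
    calc Real.log v < Real.log (Real.exp (-((2*A+1)/ε))) :=
      Real.log_lt_log hv0 (lt_of_lt_of_le hvd (min_le_right _ _))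
    _ = -((2*A+1)/ε) := Real.log_exp _
  set L : ℝ := Real.log v with hL_def
  have hεL : 2*A + 1 < ε * (-L) := by
    have : (2*A+1)/ε < -L := by linarith
    calc 2*A+1 = ((2*A+1)/ε) * ε := by field_simp
    _ < (-L) * ε := by
        apply mul_lt_mul_of_pos_right this hε
    _ = ε * (-L) := by ring
  have hLneg : L < 0 := by
    have : 0 < (2*A+1)/ε := by positivity
    linarith
  -- integrabilities
  have hint : ∀ g : ℝ → ℝ, ContinuousOn g (Ioc 0 (1/2:ℝ)) → ∀ a b : ℝ, 0 < a → 0 < b → a ≤ 1/2 → b ≤ 1/2 →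
      IntervalIntegrable g volume a b := by
    intro g hg a b ha hb ha2 hb2
    apply ContinuousOn.intervalIntegrable
    apply hg.mono
    intro x hx
    constructor
    · rcases le_total a b with h | h
      · rw [uIcc_of_le h] at hx; exact lt_of_lt_of_le ha hx.1
      · rw [uIcc_of_ge h] at hx; exact lt_of_lt_of_le hb hx.1
    · rcases le_total a b with h | h
      · rw [uIcc_of_le h] at hx; exact le_trans hx.2 hb2
      · rw [uIcc_of_ge h] at hx; exact le_trans hx.2 ha2
  have hv2 : v ≤ 1/2 := le_trans hvd'.le hd2
  have int_vd : IntervalIntegrable (fun t => K t / t) volume v d :=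
    hint _ hcont v d hv0 hd hv2 hd2
  have int_d2 : IntervalIntegrable (fun t => K t / t) volume d (1/2) :=
    hint _ hcont d (1/2) hd (by norm_num) hd2 le_rfl
  have hsplit : (∫ t in v..(1/2:ℝ), K t / t) = (∫ t in v..d, K t / t) + C₁ :=
    (integral_add_adjacent_intervals int_vd int_d2).symm
  have hdecomp : ∀ t : ℝ, K t / t = (K t - c)/t + c * (1/t) := by
    intro t
    rw [mul_one_div, ← add_div, sub_add_cancel]
  have hcont2 : ContinuousOn (fun t => (K t - c)/t) (Ioc 0 (1/2:ℝ)) :=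
    (hKc.sub continuousOn_const).div continuousOn_id (fun t ht => ne_of_gt ht.1)
  have hcont3 : ContinuousOn (fun t : ℝ => c * (1/t)) (Ioc 0 (1/2:ℝ)) :=
    continuousOn_const.mul (continuousOn_const.div continuousOn_id (fun t ht => ne_of_gt ht.1))
  have int_E : IntervalIntegrable (fun t => (K t - c)/t) volume v d :=
    hint _ hcont2 v d hv0 hd hv2 hd2
  have int_one : IntervalIntegrable (fun t : ℝ => c * (1/t)) volume v d :=
    hint _ hcont3 v d hv0 hd hv2 hd2
  have hlogd : (∫ t in v..d, c * (1/t)) = c * (Real.log d - Real.log v) := by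
    rw [intervalIntegral.integral_const_mul, integral_one_div (by
      intro h0
      rw [uIcc_of_le hvd'.le] at h0
      exact absurd h0.1 (not_le.2 hv0)),
      Real.log_div (ne_of_gt hd) (ne_of_gt hv0)]
  set E : ℝ := ∫ t in v..d, (K t - c)/t with hE_def
  have hmid : (∫ t in v..d, K t / t) = E + c * (Real.log d - Real.log v) := by
    calc (∫ t in v..d, K t / t) = ∫ t in v..d, ((K t - c)/t + c * (1/t)) := by
          simp_rw [hdecomp]
    _ = E + ∫ t in v..d, c * (1/t) := integral_add int_E int_one
    _ = E + c * (Real.log d - Real.log v) := by rw [hlogd]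
  have int_cdiv : IntervalIntegrable (fun t : ℝ => (ε/2) * (1/t)) volume v d :=
    hint _ (continuousOn_const.mul (continuousOn_const.div continuousOn_id
      (fun t ht => ne_of_gt ht.1))) v d hv0 hd hv2 hd2
  have hEbound : |E| ≤ ε/2 * (Real.log d - Real.log v) := by
    have h1 : |E| ≤ ∫ t in v..d, |(K t - c)/t| :=
      intervalIntegral.abs_integral_le_integral_abs hvd'.le
    have h2 : (∫ t in v..d, |(K t - c)/t|) ≤ ∫ t in v..d, (ε/2) * (1/t) := by
      apply integral_mono_on hvd'.le int_E.abs int_cdiv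
      intro t ht
      have ht0 : 0 < t := lt_of_lt_of_le hv0 ht.1
      rw [abs_div, abs_of_pos ht0, mul_one_div]
      gcongr
      exact hKbound t ⟨ht0, ht.2⟩
    have h3 : (∫ t in v..d, (ε/2) * (1/t)) = ε/2 * (Real.log d - Real.log v) := by
      rw [intervalIntegral.integral_const_mul, integral_one_div (by
        intro h0
        rw [uIcc_of_le hvd'.le] at h0
        exact absurd h0.1 (not_le.2 hv0)),
        Real.log_div (ne_of_gt hd) (ne_of_gt hv0)]
    linarith
  have key : (∫ t in v..(1/2:ℝ), K t / t) = (E + c * Real.log d + C₁) - c * L := by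
    rw [hsplit, hmid]; ring
  rw [Real.dist_eq]
  have hLne : L ≠ 0 := ne_of_lt hLneg
  have hrw : (∫ t in v..(1/2:ℝ), K t / t) / L - (-c) = (E + c * Real.log d + C₁) / L := by
    rw [key]
    field_simp
    ring
  rw [hrw, abs_div, abs_of_neg hLneg]
  rw [div_lt_iff₀ (by linarith : (0:ℝ) < -L)]
  have hLd : Real.log d ≤ 0 := Real.log_nonpos hd.le (by linarith)
  have habs : |E + c * Real.log d + C₁| ≤ A + |E| := by
    calc |E + c * Real.log d + C₁| = |(C₁ + c * Real.log d) + E| := by ring_nf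
    _ ≤ |C₁ + c * Real.log d| + |E| := abs_add_le _ _
  nlinarith [hEbound, habs, hεL, mul_nonneg hε.le (neg_nonneg.2 hLd), abs_nonneg E]

theorem stationary_capital_density_power_law (b σ2 : ℝ → ℝ)
    (hbc : ContinuousOn b (Icc 0 1)) (hσc : ContinuousOn σ2 (Icc 0 1))
    (hσ : ∀ v ∈ Icc (0 : ℝ) 1, 0 < σ2 v)
    (B : ℝ → ℝ) (hB : ∀ u, B u = ∫ v in (0 : ℝ)..u, b v)
    (bbar : ℝ) (hbbar : bbar = B 1)
    (hole : ∀ u ∈ Ioo (0 : ℝ) 1, B u > bbar * u)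
    (hsuper : σ2 1 / 2 < bbar - b 1)
    (Ψ : ℝ → ℝ)
    (hΨ : ∀ u, Ψ u = ∫ v in (1 / 2 : ℝ)..u, σ2 v / (2 * (B v - bbar * v)))
    (πst : ℝ → ℝ)
    (hπ : ∀ v, πst v =
      Real.exp (Ψ (1 - v)) / ∫ w in Ioo (0 : ℝ) 1, Real.exp (Ψ (1 - w))) :
    Tendsto (fun v => Real.log (πst v) / Real.log v) (nhdsWithin 0 (Ioi 0))
      (nhds (-(σ2 1 / (2 * (bbar - b 1))))) := by
  have hσ1 : 0 < σ2 1 := hσ 1 (by norm_num)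
  have hbb1 : 0 < bbar - b 1 := by nlinarith
  set c : ℝ := σ2 1 / (2 * (bbar - b 1)) with hc_def
  have hcpos : 0 < c := by positivity
  have hc1 : c < 1 := by
    rw [hc_def, div_lt_one (by linarith)]
    linarith
  have hBfun : B = fun u => ∫ v in (0 : ℝ)..u, b v := funext hB
  have hb_int : ∀ u ∈ Icc (0:ℝ) 1, IntervalIntegrable b volume 0 u := by
    intro u hu
    apply ContinuousOn.intervalIntegrable
    apply hbc.mono
    rw [uIcc_of_le hu.1]
    exact Icc_subset_Icc le_rfl hu.2
  have hBderiv : ∀ u ∈ Ioo (0:ℝ) 1, HasDerivAt B (b u) u := by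
    intro u hu
    have h1 : Icc (0:ℝ) 1 ∈ nhds u := Icc_mem_nhds hu.1 hu.2
    have h2 := intervalIntegral.integral_hasDerivAt_right
      (hb_int u (Ioo_subset_Icc_self hu))
      ⟨Icc 0 1, h1, hbc.aestronglyMeasurable measurableSet_Icc⟩
      (hbc.continuousAt h1)
    rw [hBfun]; exact h2
  have hBcont : ContinuousOn B (Ioo 0 1) :=
    fun u hu => ((hBderiv u hu).continuousAt).continuousWithinAt
  have hden : ∀ u ∈ Ioo (0:ℝ) 1, 0 < B u - bbar * u := fun u hu => sub_pos.2 (hole u hu)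
  set f : ℝ → ℝ := fun u => σ2 u / (2 * (B u - bbar * u)) with hf_def
  have hfc : ContinuousOn f (Ioo 0 1) := by
    apply (hσc.mono Ioo_subset_Icc_self).div
      (continuousOn_const.mul (hBcont.sub (continuousOn_const.mul continuousOn_id)))
    intro u hu
    have := hden u hu
    exact mul_ne_zero two_ne_zero (ne_of_gt this)
  have hfnonneg : ∀ u ∈ Ioo (0:ℝ) 1, 0 ≤ f u := by
    intro u hu
    have h1 := hσ u (Ioo_subset_Icc_self hu)
    have h2 := hden u hu
    positivity
  have huIcc : ∀ w ∈ Ioo (0:ℝ) 1, uIcc (1/2 : ℝ) w ⊆ Ioo 0 1 := by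
    intro w hw x hx
    constructor
    · exact lt_of_lt_of_le (lt_min (by norm_num) hw.1) hx.1
    · exact lt_of_le_of_lt hx.2 (max_lt (by norm_num) hw.2)
  have hΨcont : ∀ w ∈ Ioo (0:ℝ) 1, ContinuousAt Ψ w := by
    intro w hw
    have hfun : Ψ = fun u => ∫ v in (1/2:ℝ)..u, f v := funext hΨ
    have hii : IntervalIntegrable f volume (1/2) w :=
      ContinuousOn.intervalIntegrable (hfc.mono (huIcc w hw))
    have h2 := (intervalIntegral.integral_hasDerivAt_right hii
      ⟨Ioo 0 1, isOpen_Ioo.mem_nhds hw, hfc.aestronglyMeasurable measurableSet_Ioo⟩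
      (hfc.continuousAt (isOpen_Ioo.mem_nhds hw))).continuousAt
    rw [hfun]; exact h2
  -- one-sided derivative of B at 1
  have hmem1 : Icc (0:ℝ) 1 ∈ nhdsWithin 1 (Iic 1) := by
    rw [mem_nhdsWithin]
    exact ⟨Ioi 0, isOpen_Ioi, by norm_num, fun x hx => ⟨le_of_lt hx.1, hx.2⟩⟩
  have hBd1 : HasDerivWithinAt B (b 1) (Iic 1) 1 := by
    rw [hBfun]
    exact intervalIntegral.integral_hasDerivWithinAt_right (hb_int 1 (by norm_num))
      ⟨Icc 0 1, hmem1, hbc.aestronglyMeasurable measurableSet_Icc⟩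
      ((hbc.continuousWithinAt (by norm_num : (1:ℝ) ∈ Icc 0 1)).mono_of_mem_nhdsWithin hmem1)
  set g : ℝ → ℝ := fun u => B u - bbar * u with hg_def
  have hg1 : g 1 = 0 := by simp [hg_def, hbbar]
  have hgd : HasDerivWithinAt g (b 1 - bbar) (Iic 1) 1 := by
    have h2 : HasDerivWithinAt (fun u : ℝ => bbar * u) bbar (Iic 1) 1 := by
      simpa using ((hasDerivAt_id (1:ℝ)).const_mul bbar).hasDerivWithinAt
    exact hBd1.sub h2
  have hslope := hasDerivWithinAt_iff_tendsto_slope.1 hgd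
  have hmap : Tendsto (fun t : ℝ => 1 - t) (nhdsWithin 0 (Ioi 0))
      (nhdsWithin 1 (Iic 1 \ {1})) := by
    rw [tendsto_nhdsWithin_iff]
    constructor
    · have h2 : Tendsto (fun t:ℝ => 1 - t) (nhds 0) (nhds 1) := by
        have h3 : Continuous (fun t : ℝ => 1 - t) := continuous_const.sub continuous_id
        simpa using h3.tendsto 0
      exact h2.mono_left nhdsWithin_le_nhds
    · filter_upwards [self_mem_nhdsWithin] with t ht
      have ht' : (0:ℝ) < t := ht
      constructor
      · simp only [mem_Iic]; linarith
      · simp only [mem_singleton_iff]; intro hc2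
        have : t = 0 := by linarith [hc2]
        exact absurd this (ne_of_gt ht')
  have hglim : Tendsto (fun t => g (1 - t) / t) (nhdsWithin 0 (Ioi 0))
      (nhds (bbar - b 1)) := by
    have h2 := (hslope.comp hmap).neg
    rw [neg_sub] at h2
    apply h2.congr'
    filter_upwards [self_mem_nhdsWithin] with t ht
    have ht' : (0:ℝ) < t := ht
    show -(slope g 1 (1 - t)) = g (1 - t) / t
    rw [slope_def_field, hg1, sub_zero, show (1:ℝ) - t - 1 = -t by ring, div_neg, neg_neg]
  -- the function K
  set K : ℝ → ℝ := fun t => t * f (1 - t) with hK_def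
  have hmaps : MapsTo (fun t : ℝ => 1 - t) (Ioc 0 (1/2 : ℝ)) (Ioo 0 1) := by
    intro t ht
    constructor
    · show (0:ℝ) < 1 - t; linarith [ht.2]
    · show (1:ℝ) - t < 1; linarith [ht.1]
  have hKc : ContinuousOn K (Ioc 0 (1/2:ℝ)) :=
    continuousOn_id.mul (hfc.comp ((continuous_const.sub continuous_id).continuousOn) hmaps)
  have hK0 : Tendsto K (nhdsWithin 0 (Ioi 0)) (nhds c) := by
    have hlim2 : Tendsto (fun t => σ2 (1 - t)) (nhdsWithin 0 (Ioi 0)) (nhds (σ2 1)) := by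
      apply ((hσc.continuousWithinAt (by norm_num : (1:ℝ) ∈ Icc 0 1)).tendsto).comp
      rw [tendsto_nhdsWithin_iff]
      constructor
      · have h3 : Continuous (fun t : ℝ => 1 - t) := continuous_const.sub continuous_id
        exact (by simpa using h3.tendsto 0 : Tendsto (fun t:ℝ => 1-t) (nhds 0) (nhds 1)).mono_left
          nhdsWithin_le_nhds
      · filter_upwards [Ioo_mem_nhdsGT_of_mem (⟨le_rfl, zero_lt_one⟩ : (0:ℝ) ∈ Ico 0 1)] with t ht
        exact ⟨by linarith [ht.2], by linarith [ht.1]⟩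
    have hden_lim : Tendsto (fun t => 2 * (g (1 - t) / t)) (nhdsWithin 0 (Ioi 0))
        (nhds (2 * (bbar - b 1))) := tendsto_const_nhds.mul hglim
    have h4 := hlim2.div hden_lim (by positivity)
    apply h4.congr'
    filter_upwards [Ioo_mem_nhdsGT_of_mem (⟨le_rfl, zero_lt_one⟩ : (0:ℝ) ∈ Ico 0 1)] with t ht
    have ht0 : t ≠ 0 := ne_of_gt ht.1
    have hne : g (1 - t) ≠ 0 := ne_of_gt (hden _ ⟨by simp only [sub_pos]; linarith [ht.2],
      by linarith [ht.1]⟩)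
    show σ2 (1 - t) / (2 * (g (1 - t) / t)) = t * f (1 - t)
    rw [hf_def, hg_def] at *
    field_simp
  -- the main asymptotics of Ψ
  have hmain : Tendsto (fun v => Ψ (1 - v) / Real.log v) (nhdsWithin 0 (Ioi 0)) (nhds (-c)) := by
    apply (aux_ratio_log hKc hK0).congr'
    filter_upwards [Ioo_mem_nhdsGT_of_mem (⟨le_rfl, one_half_pos⟩ : (0:ℝ) ∈ Ico 0 (1/2))]
      with v hv
    have h1 : (∫ t in v..(1/2:ℝ), K t / t) = ∫ t in v..(1/2:ℝ), f (1 - t) := by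
      apply intervalIntegral.integral_congr
      intro t ht
      rw [uIcc_of_le hv.2.le] at ht
      have ht0 : t ≠ 0 := ne_of_gt (lt_of_lt_of_le hv.1 ht.1)
      show K t / t = f (1 - t)
      rw [hK_def]
      exact mul_div_cancel_left₀ _ ht0
    have h2 : (∫ t in v..(1/2:ℝ), f (1 - t)) = ∫ x in (1/2:ℝ)..(1 - v), f x := by
      have h3 := intervalIntegral.integral_comp_sub_left (a := v) (b := (1/2:ℝ)) f 1
      rw [h3]
      norm_num
    congr 1
    rw [h1, h2, hΨ]
  -- quantitative bound for integrability
  set r : ℝ := (1 + c)/2 with hr_def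
  have hr1 : r < 1 := by rw [hr_def]; linarith
  have hr0 : 0 < r := by rw [hr_def]; linarith
  have hεr : 0 < r - c := by rw [hr_def]; linarith
  have hev : ∀ᶠ v in nhdsWithin 0 (Ioi 0), Real.exp (Ψ (1 - v)) ≤ v ^ (-r) := by
    have h1 := Metric.tendsto_nhds.mp hmain (r - c) hεr
    filter_upwards [h1, Ioo_mem_nhdsGT_of_mem (⟨le_rfl, zero_lt_one⟩ : (0:ℝ) ∈ Ico 0 1)]
      with v hd hv
    have hv0 : 0 < v := hv.1
    have hL : Real.log v < 0 := Real.log_neg hv0 hv.2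
    rw [Real.dist_eq] at hd
    have h2 : -r < Ψ (1 - v) / Real.log v := by
      have h2' := abs_lt.1 hd
      have := h2'.1
      linarith
    have h4 : Ψ (1 - v) = (Ψ (1 - v) / Real.log v) * Real.log v :=
      (div_mul_cancel₀ _ (ne_of_lt hL)).symm
    have h5 := mul_lt_mul_of_neg_right h2 hL
    have h3 : Ψ (1 - v) ≤ r * (-Real.log v) := by nlinarith
    calc Real.exp (Ψ (1 - v)) ≤ Real.exp (r * (-Real.log v)) := Real.exp_le_exp.2 h3
    _ = v ^ (-r) := by
        rw [Real.rpow_def_of_pos hv0]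
        congr 1
        ring
  obtain ⟨δ₂', hδ₂', hsub⟩ := mem_nhdsGT_iff_exists_Ioo_subset.1 hev
  set m : ℝ := min δ₂' (1/2) with hm_def
  have hm0 : 0 < m := lt_min hδ₂' one_half_pos
  have hm2 : m ≤ 1/2 := min_le_right _ _
  have hexpcont : ContinuousOn (fun w => Real.exp (Ψ (1 - w))) (Ioo 0 1) := by
    apply Real.continuous_exp.comp_continuousOn
    apply ContinuousOn.comp (fun w hw => (hΨcont w hw).continuousWithinAt)
      ((continuous_const.sub continuous_id).continuousOn)
    intro w hw
    constructor
    · show (0:ℝ) < 1 - w; linarith [hw.2]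
    · show (1:ℝ) - w < 1; linarith [hw.1]
  have hmeasIoo : ∀ s : Set ℝ, MeasurableSet s → s ⊆ Ioo 0 1 →
      AEStronglyMeasurable (fun w => Real.exp (Ψ (1 - w))) (volume.restrict s) :=
    fun s hsm hss => (hexpcont.mono hss).aestronglyMeasurable hsm
  have hint1 : IntegrableOn (fun w => Real.exp (Ψ (1 - w))) (Ioo 0 m) := by
    have hrint : IntegrableOn (fun v : ℝ => v ^ (-r)) (Ioo 0 m) := by
      have h1 := intervalIntegrable_rpow' (a := 0) (b := m) (r := -r) (by linarith)
      rw [intervalIntegrable_iff_integrableOn_Ioo_of_le hm0.le] at h1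
      exact h1
    apply Integrable.mono' hrint (hmeasIoo _ measurableSet_Ioo
      (fun x hx => ⟨hx.1, lt_of_lt_of_le hx.2 (le_trans hm2 (by norm_num))⟩))
    rw [ae_restrict_iff' measurableSet_Ioo]
    apply Filter.Eventually.of_forall
    intro v hv
    rw [Real.norm_eq_abs, abs_of_pos (Real.exp_pos _)]
    exact hsub ⟨hv.1, lt_of_lt_of_le hv.2 (min_le_left _ _)⟩
  have hint2 : IntegrableOn (fun w => Real.exp (Ψ (1 - w))) (Icc m (1/2)) := by
    apply ContinuousOn.integrableOn_Icc
    apply hexpcont.mono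
    intro x hx
    exact ⟨lt_of_lt_of_le hm0 hx.1, lt_of_le_of_lt hx.2 (by norm_num)⟩
  have hint3 : IntegrableOn (fun w => Real.exp (Ψ (1 - w))) (Ioo (1/2) 1) := by
    apply Integrable.mono' (g := fun _ : ℝ => (1:ℝ))
      (integrableOn_const (by rw [Real.volume_Ioo]; exact ENNReal.ofReal_ne_top))
      (hmeasIoo _ measurableSet_Ioo (fun x hx => ⟨lt_trans one_half_pos hx.1, hx.2⟩))
    rw [ae_restrict_iff' measurableSet_Ioo]
    apply Filter.Eventually.of_forall
    intro w hw
    rw [Real.norm_eq_abs, abs_of_pos (Real.exp_pos _)]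
    rw [Real.exp_le_one_iff]
    have h1 : Ψ (1 - w) = -∫ t in (1 - w)..(1/2:ℝ), f t := by
      rw [hΨ, intervalIntegral.integral_symm]
    rw [h1, neg_nonpos]
    apply intervalIntegral.integral_nonneg (by linarith [hw.1])
    intro u hu
    exact hfnonneg u ⟨lt_of_lt_of_le (by linarith [hw.2]) hu.1, lt_of_le_of_lt hu.2 (by norm_num)⟩
  have hintZ : IntegrableOn (fun w => Real.exp (Ψ (1 - w))) (Ioo 0 1) := by
    apply IntegrableOn.mono_set ((hint1.union hint2).union hint3)
    intro x hx
    rcases lt_or_ge x m with h | h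
    · exact Or.inl (Or.inl ⟨hx.1, h⟩)
    · rcases le_or_gt x (1/2) with h' | h'
      · exact Or.inl (Or.inr ⟨h, h'⟩)
      · exact Or.inr ⟨h', hx.2⟩
  set Z : ℝ := ∫ w in Ioo (0:ℝ) 1, Real.exp (Ψ (1 - w)) with hZ_def
  have hZpos : 0 < Z := by
    rw [hZ_def]
    rw [setIntegral_pos_iff_support_of_nonneg_ae
      (Filter.Eventually.of_forall (fun w => (Real.exp_pos _).le)) hintZ]
    have hsupp : (Function.support fun w => Real.exp (Ψ (1 - w))) ∩ Ioo 0 1 = Ioo 0 1 := by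
      apply inter_eq_self_of_subset_right
      intro x _
      exact Real.exp_ne_zero _
    rw [hsupp, Real.volume_Ioo]
    simp
  have hfinal : ∀ v : ℝ, Real.log (πst v) / Real.log v
      = Ψ (1 - v) / Real.log v - Real.log Z / Real.log v := by
    intro v
    rw [hπ v, Real.log_div (Real.exp_ne_zero _) (ne_of_gt hZpos), Real.log_exp, sub_div]
  have hz0 : Tendsto (fun v : ℝ => Real.log Z / Real.log v) (nhdsWithin 0 (Ioi 0)) (nhds 0) := by
    have hat : Tendsto (fun v : ℝ => -Real.log v) (nhdsWithin 0 (Ioi 0)) atTop :=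
      tendsto_neg_atBot_atTop.comp Real.tendsto_log_nhdsGT_zero
    have h1' := hat.inv_tendsto_atTop
    have h1 : Tendsto (fun v : ℝ => (Real.log v)⁻¹) (nhdsWithin 0 (Ioi 0)) (nhds 0) := by
      have h1'' := h1'.neg
      rw [neg_zero] at h1''
      apply h1''.congr
      intro v
      show -(fun v : ℝ => -Real.log v)⁻¹ v = (Real.log v)⁻¹
      show -(-Real.log v)⁻¹ = (Real.log v)⁻¹
      rw [inv_neg, neg_neg]
    have h2 := h1.const_mul (Real.log Z)
    rw [mul_zero] at h2
    apply h2.congr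
    intro v
    rw [div_eq_mul_inv]
  have hconc := hmain.sub hz0
  rw [sub_zero] at hconc
  apply hconc.congr
  intro v
  exact (hfinal v).symm
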